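/- Let A and B be n × n real symmetric positive semidefinite matrices. Then A ∘ B ≥ (A^{1/2} ∘ B^{1/2})² in the Loewner order. -/

import Mathlib

open Matrix

/-- The positive semidefinite square root, as defined in the older Mathlib (removed since). -/
noncomputable def Matrix.PosSemidef.sqrt {n : Type*} [Fintype n] [DecidableEq n]
    {A : Matrix n n ℝ} (hA : A.PosSemidef) : Matrix n n ℝ :=
  (hA.1.eigenvectorUnitary : Matrix n n ℝ) * diagonal (fun i => √(hA.1.eigenvalues i)) *
    (star hA.1.eigenvectorUnitary : Matrix n n ℝ)

open Finset

lemma Matrix.PosSemidef.posSemidef_sqrt {n : Type*} [Fintype n] [DecidableEq n]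
    {A : Matrix n n ℝ} (hA : A.PosSemidef) : hA.sqrt.PosSemidef := by
  unfold Matrix.PosSemidef.sqrt
  have hd : (diagonal fun i => √(hA.1.eigenvalues i)).PosSemidef :=
    posSemidef_diagonal_iff.mpr fun i => Real.sqrt_nonneg _
  have := hd.mul_mul_conjTranspose_same (hA.1.eigenvectorUnitary : Matrix n n ℝ)
  simpa [star_eq_conjTranspose] using this

lemma Matrix.PosSemidef.sqrt_mul_self {n : Type*} [Fintype n] [DecidableEq n]
    {A : Matrix n n ℝ} (hA : A.PosSemidef) : hA.sqrt * hA.sqrt = A := by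
  unfold Matrix.PosSemidef.sqrt
  have hU : (star hA.1.eigenvectorUnitary : Matrix n n ℝ) * (hA.1.eigenvectorUnitary : Matrix n n ℝ) = 1 :=
    Unitary.coe_star_mul_self _
  have hdd : diagonal (fun i => √(hA.1.eigenvalues i)) * diagonal (fun i => √(hA.1.eigenvalues i))
      = diagonal (RCLike.ofReal ∘ hA.1.eigenvalues) := by
    rw [diagonal_mul_diagonal]
    congr 1
    funext i
    simp [Real.mul_self_sqrt (hA.eigenvalues_nonneg i)]
  have hs := hA.1.spectral_theorem
  rw [Unitary.conjStarAlgAut_apply] at hs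
  calc _ = (hA.1.eigenvectorUnitary : Matrix n n ℝ) * diagonal (fun i => √(hA.1.eigenvalues i)) *
        ((star hA.1.eigenvectorUnitary : Matrix n n ℝ) * (hA.1.eigenvectorUnitary : Matrix n n ℝ)) *
        diagonal (fun i => √(hA.1.eigenvalues i)) * (star hA.1.eigenvectorUnitary : Matrix n n ℝ) := by
          simp only [Matrix.mul_assoc]
    _ = (hA.1.eigenvectorUnitary : Matrix n n ℝ) * (diagonal (fun i => √(hA.1.eigenvalues i)) *
        diagonal (fun i => √(hA.1.eigenvalues i))) * (star hA.1.eigenvectorUnitary : Matrix n n ℝ) := by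
          rw [hU, Matrix.mul_one]; simp only [Matrix.mul_assoc]
    _ = A := by rw [hdd]; exact hs.symm

lemma herm_apply' {n : ℕ} {C : Matrix (Fin n) (Fin n) ℝ} (hC : C.IsHermitian)
    (i j : Fin n) : C i j = C j i := by
  conv_lhs => rw [← hC]
  simp [conjTranspose_apply]

lemma sum_swap3 {n : ℕ} {M : Type*} [AddCommMonoid M] (f : Fin n → Fin n → Fin n → M) :
    ∑ i, ∑ j, ∑ k, f i j k = ∑ k, ∑ i, ∑ j, f i j k := by
  calc ∑ i, ∑ j, ∑ k, f i j k
      = ∑ i, ∑ k, ∑ j, f i j k := Finset.sum_congr rfl fun i _ => Finset.sum_comm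
    _ = ∑ k, ∑ i, ∑ j, f i j k := Finset.sum_comm

lemma sum_swap4 {n : ℕ} {M : Type*} [AddCommMonoid M] (f : Fin n → Fin n → Fin n → Fin n → M) :
    ∑ i, ∑ j, ∑ k, ∑ l, f i j k l = ∑ k, ∑ l, ∑ i, ∑ j, f i j k l := by
  rw [sum_swap3 (fun i j k => ∑ l, f i j k l)]
  exact Finset.sum_congr rfl fun k _ => sum_swap3 _

lemma quad_form_calc {n : ℕ} (C D : Matrix (Fin n) (Fin n) ℝ)
    (hC : C.IsHermitian) (hD : D.IsHermitian) (x : Fin n → ℝ) :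
    x ⬝ᵥ (Matrix.hadamard (C * C) (D * D)) *ᵥ x =
      ∑ k, ∑ l, (∑ i, x i * C i k * D i l) ^ 2 := by
  simp only [dotProduct, mulVec, hadamard_apply, mul_apply, dotProduct]
  have L : ∀ i : Fin n,
      x i * (∑ j, (∑ k, C i k * C k j) * (∑ l, D i l * D l j) * x j)
      = ∑ j, ∑ k, ∑ l, (x i * C i k * D i l) * (x j * C j k * D j l) := by
    intro i
    rw [Finset.mul_sum]
    refine Finset.sum_congr rfl fun j _ => ?_
    rw [Finset.sum_mul_sum, Finset.sum_mul, Finset.mul_sum]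
    refine Finset.sum_congr rfl fun k _ => ?_
    rw [Finset.sum_mul, Finset.mul_sum]
    refine Finset.sum_congr rfl fun l _ => ?_
    rw [herm_apply' hC k j, herm_apply' hD l j]
    ring
  calc ∑ i, x i * (∑ j, (∑ k, C i k * C k j) * (∑ l, D i l * D l j) * x j)
      = ∑ i, ∑ j, ∑ k, ∑ l, (x i * C i k * D i l) * (x j * C j k * D j l) :=
        Finset.sum_congr rfl fun i _ => L i
    _ = ∑ k, ∑ l, ∑ i, ∑ j, (x i * C i k * D i l) * (x j * C j k * D j l) := sum_swap4 _
    _ = ∑ k, ∑ l, (∑ i, x i * C i k * D i l) ^ 2 := by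
        refine Finset.sum_congr rfl fun k _ => Finset.sum_congr rfl fun l _ => ?_
        rw [sq, Finset.sum_mul_sum]

lemma quad_form_calc2 {n : ℕ} (C D : Matrix (Fin n) (Fin n) ℝ)
    (hC : C.IsHermitian) (hD : D.IsHermitian) (x : Fin n → ℝ) :
    x ⬝ᵥ (Matrix.hadamard C D * Matrix.hadamard C D) *ᵥ x =
      ∑ k, (∑ i, x i * C i k * D i k) ^ 2 := by
  simp only [dotProduct, mulVec, hadamard_apply, mul_apply, dotProduct]
  have L : ∀ i : Fin n,
      x i * (∑ j, (∑ k, C i k * D i k * (C k j * D k j)) * x j)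
      = ∑ j, ∑ k, (x i * C i k * D i k) * (x j * C j k * D j k) := by
    intro i
    rw [Finset.mul_sum]
    refine Finset.sum_congr rfl fun j _ => ?_
    rw [Finset.sum_mul, Finset.mul_sum]
    refine Finset.sum_congr rfl fun k _ => ?_
    rw [herm_apply' hC k j, herm_apply' hD k j]
    ring
  calc ∑ i, x i * (∑ j, (∑ k, C i k * D i k * (C k j * D k j)) * x j)
      = ∑ i, ∑ j, ∑ k, (x i * C i k * D i k) * (x j * C j k * D j k) :=
        Finset.sum_congr rfl fun i _ => L i
    _ = ∑ k, ∑ i, ∑ j, (x i * C i k * D i k) * (x j * C j k * D j k) := sum_swap3 _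
    _ = ∑ k, (∑ i, x i * C i k * D i k) ^ 2 := by
        refine Finset.sum_congr rfl fun k _ => ?_
        rw [sq, Finset.sum_mul_sum]

/-- Mond–Pečarić inequality, case r = 1, s = 2: `A ∘ B ≥ (A^{1/2} ∘ B^{1/2})²`. -/
theorem hadamard_ge_sq_of_hadamard_sqrt {n : ℕ} (A B : Matrix (Fin n) (Fin n) ℝ)
    (hA : A.PosSemidef) (hB : B.PosSemidef) :
    (Matrix.hadamard A B -
      Matrix.hadamard hA.sqrt hB.sqrt * Matrix.hadamard hA.sqrt hB.sqrt).PosSemidef := by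
  set C := hA.sqrt with hCdef
  set D := hB.sqrt with hDdef
  have hC : C.IsHermitian := hA.posSemidef_sqrt.1
  have hD : D.IsHermitian := hB.posSemidef_sqrt.1
  have hM : (Matrix.hadamard C D).IsHermitian := by
    ext i j
    simp [conjTranspose_apply, hadamard_apply, herm_apply' hC j i, herm_apply' hD j i]
  refine posSemidef_iff_dotProduct_mulVec.mpr ⟨?_, ?_⟩
  · have hAB : (Matrix.hadamard A B).IsHermitian := by
      ext i j
      simp [conjTranspose_apply, hadamard_apply, herm_apply' hA.1 j i, herm_apply' hB.1 j i]
    have h2 : (Matrix.hadamard C D * Matrix.hadamard C D).IsHermitian := by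
      rw [← pow_two]; exact hM.pow 2
    exact hAB.sub h2
  · intro x
    have hx : star x = x := by simp
    rw [hx, sub_mulVec, dotProduct_sub]
    have hAe : A = C * C := (hA.sqrt_mul_self).symm
    have hBe : B = D * D := (hB.sqrt_mul_self).symm
    rw [hAe, hBe, quad_form_calc C D hC hD x, quad_form_calc2 C D hC hD x]
    have hle : ∑ k, (∑ i, x i * C i k * D i k) ^ 2
        ≤ ∑ k, ∑ l, (∑ i, x i * C i k * D i l) ^ 2 :=
      Finset.sum_le_sum fun k _ =>
        Finset.single_le_sum (f := fun l => (∑ i, x i * C i k * D i l) ^ 2)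
          (fun l _ => sq_nonneg _) (Finset.mem_univ k)
    linarith
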